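/- For integers p, q with p + q even, the integral F(p,q) = (1/(4π²)) ∫_{−π}^{π} ∫_{−π}^{π} (1 − cos(x·p + y·q)) / (6 − 4·cos x·cos y − 2·cos 2y) dx dy converges, F(0,0) = 0, and F satisfies the discrete Poisson equation on the triangular lattice with a unit point source at the origin: for every (p,q) with p + q even, F(p+1,q+1) + F(p+1,q−1) + F(p−1,q+1) + F(p−1,q−1) + F(p,q+2) + F(p,q−2) − 6·F(p,q) = 1 if (p,q) = (0,0) and 0 otherwise. -/

import Mathlib

open MeasureTheory

/-- The Fourier-integral Green's function of the triangular lattice (realized as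
integer pairs `(p,q)` with `p + q` even), normalized to vanish at the origin. -/
noncomputable def triangularGreen (p q : ℤ) : ℝ :=
  (1 / (4 * Real.pi ^ 2)) *
    ∫ x in (-Real.pi)..Real.pi, ∫ y in (-Real.pi)..Real.pi,
      (1 - Real.cos (x * (p : ℝ) + y * (q : ℝ))) /
        (6 - 4 * Real.cos x * Real.cos y - 2 * Real.cos (2 * y))

open Real

set_option maxHeartbeats 1000000

lemma tg_abs_sin_nat_mul (n : ℕ) (a : ℝ) : |Real.sin (n * a)| ≤ n * |Real.sin a| := by
  induction n with
  | zero => simp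
  | succ n ih =>
    have h2 : ((n : ℝ) + 1) * a = n * a + a := by ring
    push_cast
    rw [h2, Real.sin_add]
    calc |Real.sin (n*a) * Real.cos a + Real.cos (n*a) * Real.sin a|
        ≤ |Real.sin (n*a) * Real.cos a| + |Real.cos (n*a) * Real.sin a| := abs_add_le _ _
      _ ≤ |Real.sin (n*a)| * 1 + 1 * |Real.sin a| := by
          rw [abs_mul, abs_mul]
          gcongr
          · exact Real.abs_cos_le_one _
          · exact Real.abs_cos_le_one _
      _ ≤ n * |Real.sin a| + 1 * |Real.sin a| := by
          rw [mul_one]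
          gcongr
      _ = (n + 1) * |Real.sin a| := by ring

lemma tg_abs_sin_int_mul (m : ℤ) (a : ℝ) : |Real.sin (m * a)| ≤ |(m:ℝ)| * |Real.sin a| := by
  have h := tg_abs_sin_nat_mul m.natAbs a
  have hc : ((m.natAbs : ℕ) : ℝ) = |(m:ℝ)| := by
    rw [Nat.cast_natAbs]; push_cast; ring
  rw [hc] at h
  rcases abs_choice (m:ℝ) with hm | hm
  · rw [hm] at h ⊢; exact h
  · rw [hm] at h
    have h3 : Real.sin (-(m:ℝ) * a) = - Real.sin ((m:ℝ)*a) := by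
      rw [neg_mul, Real.sin_neg]
    rw [h3, abs_neg] at h
    rw [hm]; exact h

lemma tg_one_sub_cos_eq (a : ℝ) : 1 - Real.cos a = 2 * Real.sin (a/2) ^ 2 := by
  have h := Real.sin_sq_eq_half_sub (a/2)
  have h2 : 2 * (a/2) = a := by ring
  rw [h2] at h
  linarith

lemma tg_one_sub_cos_nonneg (a : ℝ) : 0 ≤ 1 - Real.cos a := by
  linarith [Real.cos_le_one a]

lemma tg_one_sub_cos_int_mul (m : ℤ) (a : ℝ) :
    1 - Real.cos (m * a) ≤ (m:ℝ)^2 * (1 - Real.cos a) := by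
  rw [tg_one_sub_cos_eq, tg_one_sub_cos_eq]
  have h : |Real.sin ((m:ℝ) * (a/2))| ≤ |(m:ℝ)| * |Real.sin (a/2)| := tg_abs_sin_int_mul m (a/2)
  have h2 : (m:ℝ) * a / 2 = (m:ℝ) * (a/2) := by ring
  rw [h2]
  calc 2 * Real.sin ((m:ℝ)*(a/2))^2 ≤ 2 * (|(m:ℝ)|^2 * |Real.sin (a/2)|^2) := by
        have hs : Real.sin ((m:ℝ)*(a/2))^2 ≤ |(m:ℝ)|^2 * |Real.sin (a/2)|^2 := by
          calc Real.sin ((m:ℝ)*(a/2))^2 = |Real.sin ((m:ℝ)*(a/2))|^2 := (sq_abs _).symm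
            _ ≤ (|(m:ℝ)| * |Real.sin (a/2)|)^2 := by
                apply pow_le_pow_left₀ (abs_nonneg _) h
            _ = |(m:ℝ)|^2 * |Real.sin (a/2)|^2 := mul_pow _ _ _
        linarith
    _ = (m:ℝ)^2 * (2 * Real.sin (a/2)^2) := by rw [sq_abs, sq_abs]; ring

lemma tg_one_sub_cos_add_le (a b : ℝ) :
    1 - Real.cos (a + b) ≤ 2*(1 - Real.cos a) + 2*(1 - Real.cos b) := by
  rw [tg_one_sub_cos_eq, tg_one_sub_cos_eq, tg_one_sub_cos_eq]
  have h2 : (a+b)/2 = a/2 + b/2 := by ring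
  rw [h2, Real.sin_add]
  have hca := Real.neg_one_le_cos (b/2)
  have hca' := Real.cos_le_one (b/2)
  have hcb := Real.neg_one_le_cos (a/2)
  have hcb' := Real.cos_le_one (a/2)
  nlinarith [sq_nonneg (Real.sin (a/2) * Real.cos (b/2) - Real.cos (a/2) * Real.sin (b/2)),
    sq_nonneg (Real.sin (a/2)), sq_nonneg (Real.sin (b/2)),
    mul_self_nonneg (Real.sin (a/2) * Real.sin (b/2)),
    sq_nonneg (Real.cos (a/2)), sq_nonneg (Real.cos (b/2)),
    Real.sin_sq_add_cos_sq (a/2), Real.sin_sq_add_cos_sq (b/2)]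

noncomputable def tgD (x y : ℝ) : ℝ := 6 - 4*Real.cos x*Real.cos y - 2*Real.cos (2*y)
noncomputable def tgN (p q : ℤ) (x y : ℝ) : ℝ := 1 - Real.cos (x*(p:ℝ) + y*(q:ℝ))
noncomputable def tgF (p q : ℤ) (x y : ℝ) : ℝ := tgN p q x y / tgD x y
noncomputable def tgC (p q : ℤ) : ℝ := (p:ℝ)^2 + (((q-p)/2 : ℤ):ℝ)^2

lemma tg_one_sub_cos_nonneg' (a : ℝ) : 0 ≤ 1 - Real.cos a := by
  linarith [Real.cos_le_one a]

lemma tgD_eq (x y : ℝ) : tgD x y =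
    2*(1 - Real.cos (x+y)) + 2*(1 - Real.cos (x-y)) + 2*(1 - Real.cos (2*y)) := by
  simp only [tgD, Real.cos_add, Real.cos_sub]; ring

lemma tgD_nonneg (x y : ℝ) : 0 ≤ tgD x y := by
  rw [tgD_eq]
  have := tg_one_sub_cos_nonneg' (x+y)
  have := tg_one_sub_cos_nonneg' (x-y)
  have := tg_one_sub_cos_nonneg' (2*y)
  linarith

lemma tgD_ge_add (x y : ℝ) : 2*(1 - Real.cos (x+y)) ≤ tgD x y := by
  rw [tgD_eq]
  have := tg_one_sub_cos_nonneg' (x-y)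
  have := tg_one_sub_cos_nonneg' (2*y)
  linarith

lemma tgD_ge_2y (x y : ℝ) : 2*(1 - Real.cos (2*y)) ≤ tgD x y := by
  rw [tgD_eq]
  have := tg_one_sub_cos_nonneg' (x-y)
  have := tg_one_sub_cos_nonneg' (x+y)
  linarith

lemma tgD_pos (x y : ℝ) (hy : Real.cos (2*y) ≠ 1) : 0 < tgD x y := by
  have h1 := tgD_ge_2y x y
  have h2 : Real.cos (2*y) < 1 := lt_of_le_of_ne (Real.cos_le_one _) hy
  linarith

lemma tgC_nonneg (p q : ℤ) : 0 ≤ tgC p q := add_nonneg (sq_nonneg _) (sq_nonneg _)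

lemma tgN_le (p q : ℤ) (h : Even (p+q)) (x y : ℝ) :
    tgN p q x y ≤ tgC p q * tgD x y := by
  set r : ℤ := (q - p)/2 with hr
  have hqp : Even (q - p) := by
    obtain ⟨k, hk⟩ := h
    exact ⟨k - p, by omega⟩
  have h2r : (2:ℤ) * r = q - p := by
    obtain ⟨k, hk⟩ := hqp
    omega
  have harg : x*(p:ℝ) + y*(q:ℝ) = (p:ℝ)*(x+y) + (r:ℝ)*(2*y) := by
    have hq : (q:ℝ) = (p:ℝ) + 2*(r:ℝ) := by
      have h2r' : q = p + 2*r := by omega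
      rw [h2r']; push_cast; ring
    rw [hq]; ring
  have step1 : tgN p q x y ≤ 2*(1 - Real.cos ((p:ℝ)*(x+y))) + 2*(1 - Real.cos ((r:ℝ)*(2*y))) := by
    rw [tgN, harg]
    exact tg_one_sub_cos_add_le _ _
  have step2 : 1 - Real.cos ((p:ℝ)*(x+y)) ≤ (p:ℝ)^2 * (1 - Real.cos (x+y)) :=
    tg_one_sub_cos_int_mul p (x+y)
  have step3 : 1 - Real.cos ((r:ℝ)*(2*y)) ≤ (r:ℝ)^2 * (1 - Real.cos (2*y)) :=
    tg_one_sub_cos_int_mul r (2*y)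
  have h4 := tgD_ge_add x y
  have h5 := tgD_ge_2y x y
  have hp2 : (0:ℝ) ≤ (p:ℝ)^2 := sq_nonneg _
  have hr2 : (0:ℝ) ≤ (r:ℝ)^2 := sq_nonneg _
  have : tgN p q x y ≤ (p:ℝ)^2 * tgD x y + (r:ℝ)^2 * tgD x y := by
    calc tgN p q x y ≤ 2*(1 - Real.cos ((p:ℝ)*(x+y))) + 2*(1 - Real.cos ((r:ℝ)*(2*y))) := step1
      _ ≤ 2*((p:ℝ)^2 * (1 - Real.cos (x+y))) + 2*((r:ℝ)^2 * (1 - Real.cos (2*y))) := by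
          gcongr
      _ = (p:ℝ)^2 * (2*(1 - Real.cos (x+y))) + (r:ℝ)^2 * (2*(1 - Real.cos (2*y))) := by ring
      _ ≤ (p:ℝ)^2 * tgD x y + (r:ℝ)^2 * tgD x y := by gcongr
  calc tgN p q x y ≤ (p:ℝ)^2 * tgD x y + (r:ℝ)^2 * tgD x y := this
    _ = tgC p q * tgD x y := by rw [tgC]; ring

lemma tgN_nonneg (p q : ℤ) (x y : ℝ) : 0 ≤ tgN p q x y := tg_one_sub_cos_nonneg' _

lemma tgF_nonneg (p q : ℤ) (x y : ℝ) : 0 ≤ tgF p q x y :=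
  div_nonneg (tgN_nonneg p q x y) (tgD_nonneg x y)

lemma tgF_le (p q : ℤ) (h : Even (p+q)) (x y : ℝ) : tgF p q x y ≤ tgC p q := by
  rcases eq_or_lt_of_le (tgD_nonneg x y) with hD | hD
  · simp [tgF, ← hD, tgC_nonneg p q]
  · rw [tgF, div_le_iff₀ hD]
    exact tgN_le p q h x y

lemma tgF_abs_le (p q : ℤ) (h : Even (p+q)) (x y : ℝ) : |tgF p q x y| ≤ tgC p q := by
  rw [abs_of_nonneg (tgF_nonneg p q x y)]
  exact tgF_le p q h x y

lemma tgD_continuous : Continuous (fun z : ℝ × ℝ => tgD z.1 z.2) := by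
  unfold tgD
  exact (continuous_const.sub ((continuous_const.mul (Real.continuous_cos.comp continuous_fst)).mul
    (Real.continuous_cos.comp continuous_snd))).sub
    (continuous_const.mul (Real.continuous_cos.comp (continuous_const.mul continuous_snd)))

lemma tgN_continuous (p q : ℤ) : Continuous (fun z : ℝ × ℝ => tgN p q z.1 z.2) := by
  unfold tgN
  exact continuous_const.sub (Real.continuous_cos.comp
    ((continuous_fst.mul continuous_const).add (continuous_snd.mul continuous_const)))

lemma tgF_measurable (p q : ℤ) : Measurable (fun z : ℝ × ℝ => tgF p q z.1 z.2) := by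
  have h := ((tgN_continuous p q).measurable).div (tgD_continuous.measurable)
  exact h

lemma tgN_continuous_slice (p q : ℤ) (x : ℝ) : Continuous (fun y => tgN p q x y) := by
  unfold tgN
  exact continuous_const.sub (Real.continuous_cos.comp
    (continuous_const.add (continuous_id.mul continuous_const)))

lemma tgD_continuous_slice (x : ℝ) : Continuous (fun y => tgD x y) := by
  unfold tgD
  exact (continuous_const.sub (continuous_const.mul Real.continuous_cos)).sub
    (continuous_const.mul (Real.continuous_cos.comp (continuous_const.mul continuous_id)))

lemma tgF_measurable_slice (p q : ℤ) (x : ℝ) : Measurable (fun y => tgF p q x y) := by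
  have h := ((tgN_continuous_slice p q x).measurable).div ((tgD_continuous_slice x).measurable)
  exact h

lemma tgF_integrableOn (p q : ℤ) (h : Even (p+q)) :
    IntegrableOn (fun z : ℝ × ℝ => tgF p q z.1 z.2)
      (Set.Icc (-Real.pi) Real.pi ×ˢ Set.Icc (-Real.pi) Real.pi) := by
  have hfin : volume (Set.Icc (-Real.pi) Real.pi ×ˢ Set.Icc (-Real.pi) Real.pi) < ⊤ :=
    (isCompact_Icc.prod isCompact_Icc).measure_lt_top
  refine Integrable.mono' (g := fun _ => tgC p q) ?_ ?_ ?_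
  · exact (integrableOn_const hfin.ne)
  · exact ((tgF_measurable p q).aestronglyMeasurable).restrict
  · filter_upwards with z
    exact tgF_abs_le p q h z.1 z.2

lemma tgF_intervalIntegrable (p q : ℤ) (h : Even (p+q)) (x : ℝ) :
    IntervalIntegrable (fun y => tgF p q x y) volume (-Real.pi) Real.pi := by
  rw [intervalIntegrable_iff]
  have hfin : volume (Set.uIoc (-Real.pi) Real.pi) < ⊤ := by
    exact measure_Ioc_lt_top
  refine Integrable.mono' (g := fun _ => tgC p q) ?_ ?_ ?_
  · exact (integrableOn_const hfin.ne)
  · exact ((tgF_measurable_slice p q x).aestronglyMeasurable).restrict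
  · filter_upwards with y
    exact tgF_abs_le p q h x y

lemma tg_key (p q : ℤ) (x y : ℝ) :
    tgN (p+1) (q+1) x y + tgN (p+1) (q-1) x y + tgN (p-1) (q+1) x y
      + tgN (p-1) (q-1) x y + tgN p (q+2) x y + tgN p (q-2) x y
      - 6 * tgN p q x y = Real.cos (x*(p:ℝ) + y*(q:ℝ)) * tgD x y := by
  unfold tgN tgD
  push_cast
  rw [show x*((p:ℝ)+1) + y*((q:ℝ)+1) = (x*(p:ℝ)+y*(q:ℝ)) + (x+y) by ring,
      show x*((p:ℝ)+1) + y*((q:ℝ)-1) = (x*(p:ℝ)+y*(q:ℝ)) + (x-y) by ring,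
      show x*((p:ℝ)-1) + y*((q:ℝ)+1) = (x*(p:ℝ)+y*(q:ℝ)) - (x-y) by ring,
      show x*((p:ℝ)-1) + y*((q:ℝ)-1) = (x*(p:ℝ)+y*(q:ℝ)) - (x+y) by ring,
      show x*(p:ℝ) + y*((q:ℝ)+2) = (x*(p:ℝ)+y*(q:ℝ)) + (2*y) by ring,
      show x*(p:ℝ) + y*((q:ℝ)-2) = (x*(p:ℝ)+y*(q:ℝ)) - (2*y) by ring]
  simp only [Real.cos_add, Real.cos_sub, Real.sin_add, Real.sin_sub]
  ring

lemma tg_bracket (p q : ℤ) (x y : ℝ) (hD : tgD x y ≠ 0) :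
    tgF (p+1) (q+1) x y + tgF (p+1) (q-1) x y + tgF (p-1) (q+1) x y
      + tgF (p-1) (q-1) x y + tgF p (q+2) x y + tgF p (q-2) x y
      - 6 * tgF p q x y = Real.cos (x*(p:ℝ) + y*(q:ℝ)) := by
  unfold tgF
  field_simp
  linear_combination tg_key p q x y

lemma tg_bad_null : volume {y : ℝ | Real.cos (2*y) = 1} = 0 := by
  have hsub : {y : ℝ | Real.cos (2*y) = 1} ⊆ Set.range (fun n : ℤ => (n:ℝ) * Real.pi) := by
    intro y hy
    rw [Set.mem_setOf_eq, Real.cos_eq_one_iff] at hy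
    obtain ⟨n, hn⟩ := hy
    refine ⟨n, ?_⟩
    show (n:ℝ) * Real.pi = y
    linarith
  exact measure_mono_null hsub (Set.Countable.measure_zero (Set.countable_range _) _)

lemma tg_ae_good : ∀ᵐ y : ℝ, Real.cos (2*y) ≠ 1 := by
  rw [ae_iff]
  simpa using tg_bad_null

noncomputable def tgH (p q : ℤ) (x : ℝ) : ℝ := ∫ y in (-Real.pi)..Real.pi, tgF p q x y

lemma tgH_continuous (p q : ℤ) (h : Even (p+q)) : Continuous (tgH p q) := by
  apply intervalIntegral.continuous_of_dominated_interval
    (bound := fun _ => tgC p q) (μ := volume)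
  · intro x
    exact ((tgF_measurable_slice p q x).aestronglyMeasurable).restrict
  · intro x
    filter_upwards with y _
    rw [Real.norm_eq_abs]
    exact tgF_abs_le p q h x y
  · exact intervalIntegrable_const
  · filter_upwards [tg_ae_good] with y hy _
    have hD : Continuous (fun x => tgD x y) := by
      unfold tgD
      exact (continuous_const.sub ((continuous_const.mul Real.continuous_cos).mul
        continuous_const)).sub continuous_const
    have hN : Continuous (fun x => tgN p q x y) := by
      unfold tgN
      exact continuous_const.sub (Real.continuous_cos.comp
        ((continuous_id.mul continuous_const).add continuous_const))
    have hDne : ∀ x, tgD x y ≠ 0 := fun x => (tgD_pos x y hy).ne'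
    have := hN.div hD hDne
    exact this

lemma tg_int_cos_ne (c : ℝ) (m : ℤ) (hm : m ≠ 0) :
    ∫ y in (-Real.pi)..Real.pi, Real.cos (c + y*(m:ℝ)) = 0 := by
  have hmr : (m:ℝ) ≠ 0 := Int.cast_ne_zero.2 hm
  have h1 : ∀ y : ℝ, c + y*(m:ℝ) = (m:ℝ)*y + c := fun y => by ring
  simp only [h1]
  rw [intervalIntegral.integral_comp_mul_add Real.cos hmr c]
  rw [integral_cos]
  have hs : Real.sin ((m:ℝ)*Real.pi + c) = Real.cos ((m:ℝ)*Real.pi) * Real.sin c := by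
    rw [Real.sin_add, Real.sin_int_mul_pi]; ring
  have hs2 : Real.sin ((m:ℝ)*(-Real.pi) + c) = Real.cos ((m:ℝ)*Real.pi) * Real.sin c := by
    have : (m:ℝ)*(-Real.pi) + c = -((m:ℝ)*Real.pi) + c := by ring
    rw [this, Real.sin_add, Real.sin_neg, Real.cos_neg, Real.sin_int_mul_pi]; ring
  rw [hs, hs2]
  simp

lemma tg_int_cos_zero (c : ℝ) :
    ∫ y in (-Real.pi)..Real.pi, Real.cos c = (2*Real.pi) * Real.cos c := by
  rw [intervalIntegral.integral_const]
  rw [smul_eq_mul]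
  ring

lemma tgH_comb (p q : ℤ) (h : Even (p+q)) (x : ℝ) :
    tgH (p+1) (q+1) x + tgH (p+1) (q-1) x + tgH (p-1) (q+1) x + tgH (p-1) (q-1) x
      + tgH p (q+2) x + tgH p (q-2) x - 6 * tgH p q x
      = ∫ y in (-Real.pi)..Real.pi, Real.cos (x*(p:ℝ) + y*(q:ℝ)) := by
  obtain ⟨k, hk⟩ := h
  have h : Even (p + q) := ⟨k, hk⟩
  have he1 : Even ((p+1) + (q+1)) := ⟨k+1, by omega⟩
  have he2 : Even ((p+1) + (q-1)) := ⟨k, by omega⟩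
  have he3 : Even ((p-1) + (q+1)) := ⟨k, by omega⟩
  have he4 : Even ((p-1) + (q-1)) := ⟨k-1, by omega⟩
  have he5 : Even (p + (q+2)) := ⟨k+1, by omega⟩
  have he6 : Even (p + (q-2)) := ⟨k-1, by omega⟩
  have i1 := tgF_intervalIntegrable (p+1) (q+1) he1 x
  have i2 := tgF_intervalIntegrable (p+1) (q-1) he2 x
  have i3 := tgF_intervalIntegrable (p-1) (q+1) he3 x
  have i4 := tgF_intervalIntegrable (p-1) (q-1) he4 x
  have i5 := tgF_intervalIntegrable p (q+2) he5 x
  have i6 := tgF_intervalIntegrable p (q-2) he6 x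
  have i7 := tgF_intervalIntegrable p q h x
  unfold tgH
  rw [← intervalIntegral.integral_const_mul,
      ← intervalIntegral.integral_add i1 i2,
      ← intervalIntegral.integral_add (i1.add i2) i3,
      ← intervalIntegral.integral_add ((i1.add i2).add i3) i4,
      ← intervalIntegral.integral_add (((i1.add i2).add i3).add i4) i5,
      ← intervalIntegral.integral_add ((((i1.add i2).add i3).add i4).add i5) i6,
      ← intervalIntegral.integral_sub (((((i1.add i2).add i3).add i4).add i5).add i6)
        (i7.const_mul 6)]
  apply intervalIntegral.integral_congr_ae
  filter_upwards [tg_ae_good] with y hy _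
  exact tg_bracket p q x y (tgD_pos x y hy).ne'

lemma tg_cos_integral (p q : ℤ) :
    (∫ x in (-Real.pi)..Real.pi, ∫ y in (-Real.pi)..Real.pi,
        Real.cos (x*(p:ℝ) + y*(q:ℝ)))
      = if p = 0 ∧ q = 0 then 4*Real.pi^2 else 0 := by
  by_cases hq : q = 0
  · subst hq
    have hin : ∀ x ∈ Set.uIcc (-Real.pi) Real.pi,
        (∫ y in (-Real.pi)..Real.pi, Real.cos (x*(p:ℝ) + y*((0:ℤ):ℝ)))
          = 2*Real.pi*Real.cos (x*(p:ℝ)) := by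
      intro x _
      simp only [Int.cast_zero, mul_zero, add_zero]
      rw [tg_int_cos_zero]
    rw [intervalIntegral.integral_congr hin]
    by_cases hp : p = 0
    · subst hp
      simp only [Int.cast_zero, mul_zero, Real.cos_zero, mul_one]
      rw [intervalIntegral.integral_const]
      simp only [and_self, if_true]
      rw [smul_eq_mul]
      ring
    · simp only [intervalIntegral.integral_const_mul]
      have h0 := tg_int_cos_ne 0 p hp
      simp only [zero_add] at h0
      have hswap : ∀ x : ℝ, x * (p:ℝ) = (p:ℝ) * x := fun x => mul_comm _ _
      have h0' : (∫ x in (-Real.pi)..Real.pi, Real.cos (x * (p:ℝ))) = 0 := by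
        have := h0
        exact this
      rw [h0']
      simp [hp]
  · have hin : ∀ x ∈ Set.uIcc (-Real.pi) Real.pi,
        (∫ y in (-Real.pi)..Real.pi, Real.cos (x*(p:ℝ) + y*(q:ℝ))) = 0 := by
      intro x _
      exact tg_int_cos_ne _ q hq
    rw [intervalIntegral.integral_congr hin]
    simp [hq]


lemma tg_TG_eq (p q : ℤ) :
    triangularGreen p q = (1 / (4 * Real.pi ^ 2)) * ∫ x in (-Real.pi)..Real.pi, tgH p q x := rfl

lemma tg_main (p q : ℤ) (h : Even (p+q)) :
    triangularGreen (p + 1) (q + 1) + triangularGreen (p + 1) (q - 1)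
      + triangularGreen (p - 1) (q + 1) + triangularGreen (p - 1) (q - 1)
      + triangularGreen p (q + 2) + triangularGreen p (q - 2)
      - 6 * triangularGreen p q
      = if p = 0 ∧ q = 0 then 1 else 0 := by
  obtain ⟨k, hk⟩ := h
  have h : Even (p + q) := ⟨k, hk⟩
  have he1 : Even ((p+1) + (q+1)) := ⟨k+1, by omega⟩
  have he2 : Even ((p+1) + (q-1)) := ⟨k, by omega⟩
  have he3 : Even ((p-1) + (q+1)) := ⟨k, by omega⟩
  have he4 : Even ((p-1) + (q-1)) := ⟨k-1, by omega⟩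
  have he5 : Even (p + (q+2)) := ⟨k+1, by omega⟩
  have he6 : Even (p + (q-2)) := ⟨k-1, by omega⟩
  have j1 := ((tgH_continuous (p+1) (q+1) he1).intervalIntegrable (μ := volume) (-Real.pi) Real.pi)
  have j2 := ((tgH_continuous (p+1) (q-1) he2).intervalIntegrable (μ := volume) (-Real.pi) Real.pi)
  have j3 := ((tgH_continuous (p-1) (q+1) he3).intervalIntegrable (μ := volume) (-Real.pi) Real.pi)
  have j4 := ((tgH_continuous (p-1) (q-1) he4).intervalIntegrable (μ := volume) (-Real.pi) Real.pi)
  have j5 := ((tgH_continuous p (q+2) he5).intervalIntegrable (μ := volume) (-Real.pi) Real.pi)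
  have j6 := ((tgH_continuous p (q-2) he6).intervalIntegrable (μ := volume) (-Real.pi) Real.pi)
  have j7 := ((tgH_continuous p q h).intervalIntegrable (μ := volume) (-Real.pi) Real.pi)
  have hsum :
      (∫ x in (-Real.pi)..Real.pi, tgH (p+1) (q+1) x)
        + (∫ x in (-Real.pi)..Real.pi, tgH (p+1) (q-1) x)
        + (∫ x in (-Real.pi)..Real.pi, tgH (p-1) (q+1) x)
        + (∫ x in (-Real.pi)..Real.pi, tgH (p-1) (q-1) x)
        + (∫ x in (-Real.pi)..Real.pi, tgH p (q+2) x)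
        + (∫ x in (-Real.pi)..Real.pi, tgH p (q-2) x)
        - 6 * (∫ x in (-Real.pi)..Real.pi, tgH p q x)
      = if p = 0 ∧ q = 0 then 4*Real.pi^2 else 0 := by
    rw [← intervalIntegral.integral_const_mul,
        ← intervalIntegral.integral_add j1 j2,
        ← intervalIntegral.integral_add (j1.add j2) j3,
        ← intervalIntegral.integral_add ((j1.add j2).add j3) j4,
        ← intervalIntegral.integral_add (((j1.add j2).add j3).add j4) j5,
        ← intervalIntegral.integral_add ((((j1.add j2).add j3).add j4).add j5) j6,
        ← intervalIntegral.integral_sub (((((j1.add j2).add j3).add j4).add j5).add j6)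
          (j7.const_mul 6)]
    rw [intervalIntegral.integral_congr (g := fun x =>
      ∫ y in (-Real.pi)..Real.pi, Real.cos (x*(p:ℝ) + y*(q:ℝ)))
      (fun x _ => tgH_comb p q h x)]
    exact tg_cos_integral p q
  have hpi : (4 * Real.pi ^ 2) ≠ 0 := by
    have := Real.pi_ne_zero
    positivity
  rw [tg_TG_eq, tg_TG_eq, tg_TG_eq, tg_TG_eq, tg_TG_eq, tg_TG_eq, tg_TG_eq]
  have expand : ∀ A1 A2 A3 A4 A5 A6 A7 c : ℝ,
      c * A1 + c * A2 + c * A3 + c * A4 + c * A5 + c * A6 - 6 * (c * A7)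
        = c * (A1 + A2 + A3 + A4 + A5 + A6 - 6 * A7) := by intros; ring
  rw [expand, hsum]
  by_cases hpq : p = 0 ∧ q = 0
  · simp only [hpq, and_self, if_true]
    field_simp
  · simp only [hpq, if_false, mul_zero]


/-- The integral defining `triangularGreen` converges, vanishes at the origin, and
satisfies the discrete Poisson equation on the triangular lattice with a unit
point source at the origin. -/
theorem triangularGreen_solves_discrete_poisson :
    triangularGreen 0 0 = 0 ∧
    ∀ p q : ℤ, Even (p + q) →
      (IntegrableOn
        (fun z : ℝ × ℝ =>
          (1 - Real.cos (z.1 * (p : ℝ) + z.2 * (q : ℝ))) /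
            (6 - 4 * Real.cos z.1 * Real.cos z.2 - 2 * Real.cos (2 * z.2)))
        (Set.Icc (-Real.pi) Real.pi ×ˢ Set.Icc (-Real.pi) Real.pi)) ∧
      (triangularGreen (p + 1) (q + 1) + triangularGreen (p + 1) (q - 1)
        + triangularGreen (p - 1) (q + 1) + triangularGreen (p - 1) (q - 1)
        + triangularGreen p (q + 2) + triangularGreen p (q - 2)
        - 6 * triangularGreen p q
        = if p = 0 ∧ q = 0 then 1 else 0) := by
  refine ⟨?_, fun p q h => ⟨?_, tg_main p q h⟩⟩
  · unfold triangularGreen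
    simp
  · exact tgF_integrableOn p q h
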